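/- Let P be a phylogenetic collection of partitions of N. Then the graph G_P (with vertex set N ∪ P, edges between p,q ∈ P iff some A satisfies A ∈ p and N\A ∈ q, and edges between p ∈ P and i ∈ N iff {i} ∈ p) is a phylogenetic tree whose leaf set is N, i.e., it is a tree, its leaves are exactly the elements of N, and it has no vertex of degree 2. -/

import Mathlib

open Set

/-- A phylogenetic collection of partitions of (the finite set) `α`:
(P1) every partition has at least 3 parts; (P2) every singleton is a part of some
partition; (P3) every subset is a part of at most one partition; (P4) the complement of
every part of cardinality at least 2 is also a part of some partition. -/
def IsPhyloP {α : Type*} (P : Set (Set (Set α))) : Prop :=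
  (∀ p ∈ P, Setoid.IsPartition p ∧ 3 ≤ p.ncard) ∧
  (∀ i : α, ∃ p ∈ P, ({i} : Set α) ∈ p) ∧
  (∀ A : Set α, ∀ p ∈ P, ∀ q ∈ P, A ∈ p → A ∈ q → p = q) ∧
  (∀ p ∈ P, ∀ A ∈ p, 2 ≤ A.ncard → ∃ q ∈ P, Aᶜ ∈ q)

/-- The adjacency relation of the graph `G_P` on the vertex set `N ∪ P`:
two partitions `p, q` are adjacent iff there is a set `A` with `A ∈ p` and `N \ A ∈ q`;
a partition `p` and an element `i` are adjacent iff `{i} ∈ p`; no two elements of `N`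
are adjacent. -/
def GPAdj {α : Type*} (P : Set (Set (Set α))) : α ⊕ ↥P → α ⊕ ↥P → Prop
  | Sum.inl _, Sum.inl _ => False
  | Sum.inl i, Sum.inr p => ({i} : Set α) ∈ p.1
  | Sum.inr p, Sum.inl i => ({i} : Set α) ∈ p.1
  | Sum.inr p, Sum.inr q => p ≠ q ∧ ∃ A : Set α, A ∈ p.1 ∧ Aᶜ ∈ q.1

/-- The graph `G_P` with vertex set `N ∪ P`. -/
def GP {α : Type*} (P : Set (Set (Set α))) : SimpleGraph (α ⊕ ↥P) where
  Adj := GPAdj P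
  symm := by
    constructor
    rintro (i | p) (j | q) h
    · exact h.elim
    · exact h
    · exact h
    · obtain ⟨hne, A, hA, hAc⟩ := h
      exact ⟨hne.symm, Aᶜ, hAc, by rwa [compl_compl]⟩
  loopless := by
    constructor
    rintro (i | p) h
    · exact h
    · exact h.1 rfl

section Aux

/-- From a set of at least three elements, one can pick an element different from
any two given ones. -/
lemma aux_third {β : Type*} {s : Set β} (hs : 3 ≤ s.ncard) (a b : β) :
    ∃ c ∈ s, c ≠ a ∧ c ≠ b := by
  by_contra h
  push_neg at h
  have hsub : s ⊆ ({a, b} : Set β) := by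
    intro c hc
    by_cases hca : c = a
    · exact Or.inl hca
    · exact Or.inr (h c hc hca)
  have hfin : ({a, b} : Set β).Finite := (Set.finite_singleton b).insert a
  have h2 : ({a, b} : Set β).ncard ≤ 2 := by
    have := Set.ncard_insert_le a ({b} : Set β)
    simpa [Set.ncard_singleton] using this
  have := Set.ncard_le_ncard hsub hfin
  omega

lemma head?_mem {β : Type*} {l : List β} {a : β} (h : l.head? = some a) : a ∈ l := by
  cases l <;> simp_all

variable {α : Type*} [Fintype α] {P : Set (Set (Set α))}

omit [Fintype α] in
lemma adj_inr_inl {p : ↥P} {i : α} :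
    (GP P).Adj (Sum.inr p) (Sum.inl i) ↔ ({i} : Set α) ∈ p.1 := Iff.rfl

omit [Fintype α] in
lemma adj_inl_inr {p : ↥P} {i : α} :
    (GP P).Adj (Sum.inl i) (Sum.inr p) ↔ ({i} : Set α) ∈ p.1 := Iff.rfl

omit [Fintype α] in
lemma adj_inl_inl {i j : α} : ¬ (GP P).Adj (Sum.inl i) (Sum.inl j) := fun h => h

omit [Fintype α] in
lemma adj_inl_cases {i : α} {y : α ⊕ ↥P} (h : (GP P).Adj (Sum.inl i) y) :
    ∃ r : ↥P, y = Sum.inr r ∧ ({i} : Set α) ∈ r.1 := by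
  rcases y with j | r
  · exact absurd h adj_inl_inl
  · exact ⟨r, rfl, h⟩

omit [Fintype α] in
lemma adj_inr_cases {p : ↥P} {y : α ⊕ ↥P} (h : (GP P).Adj (Sum.inr p) y) :
    (∃ i : α, y = Sum.inl i ∧ ({i} : Set α) ∈ p.1) ∨
    (∃ (q : ↥P) (A : Set α), y = Sum.inr q ∧ p ≠ q ∧ A ∈ p.1 ∧ Aᶜ ∈ q.1) := by
  rcases y with i | q
  · exact Or.inl ⟨i, rfl, h⟩
  · obtain ⟨hne, A, hA, hAc⟩ := h
    exact Or.inr ⟨q, A, rfl, hne, hA, hAc⟩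

variable (hP : IsPhyloP P)
include hP

omit [Fintype α] in
lemma part_nonempty (p : ↥P) {A : Set α} (hA : A ∈ p.1) : A.Nonempty := by
  rcases Set.eq_empty_or_nonempty A with rfl | h
  · exact absurd hA ((hP.1 p.1 p.2).1.1)
  · exact h

omit [Fintype α] in
lemma part_eq (p : ↥P) {A B : Set α} {a : α} (hA : A ∈ p.1) (hB : B ∈ p.1)
    (haA : a ∈ A) (haB : a ∈ B) : A = B := by
  obtain ⟨b, _, hbu⟩ := (hP.1 p.1 p.2).1.2 a
  exact (hbu A ⟨hA, haA⟩).trans (hbu B ⟨hB, haB⟩).symm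

omit [Fintype α] in
lemma part_cover (p : ↥P) (a : α) : ∃ A ∈ p.1, a ∈ A := by
  obtain ⟨b, ⟨hb, hab⟩, _⟩ := (hP.1 p.1 p.2).1.2 a
  exact ⟨b, hb, hab⟩

omit [Fintype α] in
lemma compl_not_mem (p : ↥P) {A : Set α} (hA : A ∈ p.1) : Aᶜ ∉ p.1 := by
  intro hAc
  obtain ⟨C, hC, hCA, hCAc⟩ := aux_third (hP.1 p.1 p.2).2 A Aᶜ
  obtain ⟨c, hc⟩ := part_nonempty hP p hC
  by_cases hcA : c ∈ A
  · exact hCA (part_eq hP p hC hA hc hcA)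
  · exact hCAc (part_eq hP p hC hAc hc hcA)

omit [Fintype α] in
lemma part_unique {p q : ↥P} {A : Set α} (hA : A ∈ p.1) (hA' : A ∈ q.1) : p = q :=
  Subtype.ext (hP.2.2.1 A p.1 p.2 q.1 q.2 hA hA')

omit [Fintype α] in
lemma ne_of_compl_mem {p q : ↥P} {A : Set α} (hA : A ∈ p.1) (hAc : Aᶜ ∈ q.1) : p ≠ q := by
  rintro rfl
  exact compl_not_mem hP p hA hAc

lemma two_le_of_compl_mem (q : ↥P) {A : Set α} (hAc : Aᶜ ∈ q.1) : 2 ≤ A.ncard := by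
  obtain ⟨B₁, hB₁, hB₁ne, -⟩ := aux_third (hP.1 q.1 q.2).2 Aᶜ Aᶜ
  obtain ⟨B₂, hB₂, hB₂ne, hB₂B₁⟩ := aux_third (hP.1 q.1 q.2).2 Aᶜ B₁
  obtain ⟨b₁, hb₁⟩ := part_nonempty hP q hB₁
  obtain ⟨b₂, hb₂⟩ := part_nonempty hP q hB₂
  have hb₁A : b₁ ∈ A := by
    by_contra h
    exact hB₁ne (part_eq hP q hB₁ hAc hb₁ h)
  have hb₂A : b₂ ∈ A := by
    by_contra h
    exact hB₂ne (part_eq hP q hB₂ hAc hb₂ h)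
  have hne : b₂ ≠ b₁ := by
    intro h
    exact hB₂B₁ (part_eq hP q hB₂ hB₁ hb₂ (h ▸ hb₁))
  have : 1 < A.ncard := (Set.one_lt_ncard_iff A.toFinite).mpr ⟨b₂, b₁, hb₂A, hb₁A, hne⟩
  omega

omit [Fintype α] in
lemma exists_nbr (p : ↥P) {A : Set α} (hA : A ∈ p.1) (h2 : 2 ≤ A.ncard) :
    ∃ q : ↥P, Aᶜ ∈ q.1 := by
  obtain ⟨q, hq, hqc⟩ := hP.2.2.2 p.1 p.2 A hA h2
  exact ⟨⟨q, hq⟩, hqc⟩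

omit [Fintype α] in
lemma witness_unique {p q : ↥P} {A B : Set α} (hA : A ∈ p.1) (hB : B ∈ p.1)
    (hAc : Aᶜ ∈ q.1) (hBc : Bᶜ ∈ q.1) : A = B := by
  by_contra hne
  have hBA : B = Aᶜ := by
    ext x
    constructor
    · intro hxB hxA
      exact hne (part_eq hP p hA hB hxA hxB)
    · intro hxA
      by_contra hxB
      have : Aᶜ = Bᶜ := part_eq hP q hAc hBc hxA hxB
      exact hne (by simpa using congrArg compl this)
  exact compl_not_mem hP p hA (hBA ▸ hB)

/-- Descend towards an element: from any partition `p` and any part `A ∈ p` containing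
`j`, the vertex `j` is reachable. -/
lemma reach : ∀ (n : ℕ) (p : ↥P) (j : α) (A : Set α), A ∈ p.1 → j ∈ A →
    A.ncard ≤ n → (GP P).Reachable (Sum.inr p) (Sum.inl j) := by
  intro n
  induction n with
  | zero =>
    intro p j A hA hj hn
    have : A.ncard = 0 := Nat.le_zero.mp hn
    rw [Set.ncard_eq_zero A.toFinite] at this
    exact absurd hj (this ▸ notMem_empty j)
  | succ n ih =>
    intro p j A hA hj hn
    by_cases h2 : 2 ≤ A.ncard
    · obtain ⟨q, hqc⟩ := exists_nbr hP p hA h2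
      have hadj : (GP P).Adj (Sum.inr p) (Sum.inr q) :=
        ⟨ne_of_compl_mem hP hA hqc, A, hA, hqc⟩
      obtain ⟨B, hB, hjB⟩ := part_cover hP q j
      have hBne : B ≠ Aᶜ := fun h => (h ▸ hjB) hj
      have hBsub : B ⊆ A := by
        intro x hx
        by_contra hxA
        exact hBne (part_eq hP q hB hqc hx hxA)
      have hBA : B ≠ A := by
        intro h
        exact ne_of_compl_mem hP hA hqc (part_unique hP hA (h ▸ hB))
      have hss : B ⊂ A := ⟨hBsub, fun h => hBA (hBsub.antisymm h)⟩
      have hlt : B.ncard < A.ncard := Set.ncard_lt_ncard hss A.toFinite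
      exact hadj.reachable.trans (ih q j B hB hjB (by omega))
    · have h1 : A.ncard = 1 := by
        have := (Set.ncard_pos A.toFinite).mpr ⟨j, hj⟩
        omega
      obtain ⟨a, ha⟩ := Set.ncard_eq_one.mp h1
      have : a = j := by
        have := ha ▸ hj
        simpa using this.symm
      subst this
      exact (adj_inr_inl.mpr (ha ▸ hA) :
        (GP P).Adj (Sum.inr p) (Sum.inl a)).reachable

lemma gp_connected (hcard : 3 ≤ Fintype.card α) : (GP P).Connected := by
  have hne : Nonempty α := Fintype.card_pos_iff.mp (by omega)
  obtain ⟨i₀⟩ := hne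
  have : Nonempty (α ⊕ ↥P) := ⟨Sum.inl i₀⟩
  have hreach : ∀ x : α ⊕ ↥P, (GP P).Reachable x (Sum.inl i₀) := by
    intro x
    have key : ∀ p : ↥P, (GP P).Reachable (Sum.inr p) (Sum.inl i₀) := by
      intro p
      obtain ⟨A, hA, hi₀⟩ := part_cover hP p i₀
      exact reach hP A.ncard p i₀ A hA hi₀ le_rfl
    rcases x with i | p
    · by_cases h : i = i₀
      · subst h; exact SimpleGraph.Reachable.refl _
      · obtain ⟨q, hq, hqi⟩ := hP.2.1 i
        exact ((adj_inl_inr.mpr hqi :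
          (GP P).Adj (Sum.inl i) (Sum.inr ⟨q, hq⟩)).reachable).trans (key ⟨q, hq⟩)
    · exact key p
  exact ⟨fun x y => (hreach x).trans (hreach y).symm⟩

omit [Fintype α] in
/-- The key no-return lemma: walking away from a partition `q` through a part other
than `D`, every partition visited later has a part strictly containing `D`. -/
lemma no_return : ∀ {x z : α ⊕ ↥P} (W : (GP P).Walk x z), W.IsPath →
    ∀ (q : ↥P) (D : Set α), x = Sum.inr q → D ∈ q.1 →
    (∀ r : ↥P, W.support.tail.head? = some (Sum.inr r) → Dᶜ ∉ r.1) →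
    ∀ s : ↥P, Sum.inr s ∈ W.support.tail → ∃ C ∈ s.1, D ⊂ C := by
  intro x z W
  induction W with
  | nil =>
    intro _ q D hx hD hfirst s hs
    simp at hs
  | @cons u y z hadj W ih =>
    intro hpath q D hx hD hfirst s hs
    subst hx
    have hWpath : W.IsPath := ((SimpleGraph.Walk.cons_isPath_iff _ _).mp hpath).1
    have hxnot : Sum.inr q ∉ W.support :=
      ((SimpleGraph.Walk.cons_isPath_iff _ _).mp hpath).2
    rw [SimpleGraph.Walk.support_cons, List.tail_cons] at hs
    rcases adj_inr_cases hadj with ⟨i, rfl, h1⟩ | ⟨r, B, rfl, hqr, hB, hBc⟩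
    · -- the second vertex is a leaf `i`; then the walk must stop there
      cases W with
      | nil => simp at hs
      | cons hadj2 W2 =>
        obtain ⟨r, rfl, h2⟩ := adj_inl_cases hadj2
        have hrq : r = q := part_unique hP h2 h1
        exfalso
        apply hxnot
        rw [SimpleGraph.Walk.support_cons]
        exact List.mem_cons_of_mem _ (hrq ▸ W2.start_mem_support)
    · -- the second vertex is a partition `r`, entered through part `B ∈ q`
      have hfirstW : (SimpleGraph.Walk.cons hadj W).support.tail.head? =
          some (Sum.inr r) := by
        rw [SimpleGraph.Walk.support_cons, List.tail_cons,
          SimpleGraph.Walk.support_eq_cons]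
        rfl
      have hBD : B ≠ D := by
        intro h
        exact hfirst r hfirstW (by rw [← h]; exact hBc)
      have hDsub : D ⊆ Bᶜ := by
        intro x hx hxB
        exact hBD (part_eq hP q hB hD hxB hx)
      have hDBc : D ≠ Bᶜ := by
        intro h
        exact compl_not_mem hP q hD (by rw [h, compl_compl]; exact hB)
      have hss : D ⊂ Bᶜ := ⟨hDsub, fun h => hDBc (hDsub.antisymm h)⟩
      have hih := ih hWpath r Bᶜ rfl hBc (by
        intro r2 hr2 hmem
        rw [compl_compl] at hmem
        obtain rfl : r2 = q := part_unique hP hmem hB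
        apply hxnot
        rw [SimpleGraph.Walk.support_eq_cons]
        exact List.mem_cons_of_mem _ (head?_mem hr2))
      rw [SimpleGraph.Walk.support_eq_cons] at hs
      rcases List.mem_cons.mp hs with hs | hs
      · obtain rfl : s = r := Sum.inr_injective hs
        exact ⟨Bᶜ, hBc, hss⟩
      · obtain ⟨C, hC, hsub⟩ := hih s hs
        exact ⟨C, hC, hss.trans hsub⟩

omit [Fintype α] in
lemma gp_acyclic : (GP P).IsAcyclic := by
  classical
  have key : ∀ (p : ↥P) (c : (GP P).Walk (Sum.inr p) (Sum.inr p)), ¬ c.IsCycle := by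
    intro p c hc
    have h3 := hc.three_le_length
    cases c with
    | nil => simp at h3
    | cons hadj W =>
      have hWpath : W.IsPath := SimpleGraph.Walk.IsPath.mk' (by
        have := ((SimpleGraph.Walk.isCycle_def _).mp hc).2.2
        rwa [SimpleGraph.Walk.support_cons, List.tail_cons] at this)
      rcases adj_inr_cases hadj with ⟨i, rfl, h1⟩ | ⟨q, A, rfl, hpq, hA, hAc⟩
      · -- a cycle starting with an edge to a leaf must immediately come back
        cases W with
        | cons hadj2 W2 =>
          obtain ⟨r, rfl, h2⟩ := adj_inl_cases hadj2
          obtain rfl : r = p := part_unique hP h2 h1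
          have hW2 : W2 = SimpleGraph.Walk.nil :=
            SimpleGraph.Walk.isPath_iff_eq_nil.mp
              ((SimpleGraph.Walk.cons_isPath_iff _ _).mp hWpath).1
          subst hW2
          simp [SimpleGraph.Walk.length_cons] at h3
      · -- a cycle starting with edge p → q with witness A ∈ p, Aᶜ ∈ q
        have hfirst : ∀ r : ↥P, W.support.tail.head? = some (Sum.inr r) →
            (Aᶜ)ᶜ ∉ r.1 := by
          intro r hr hmem
          rw [compl_compl] at hmem
          obtain rfl : r = p := part_unique hP hmem hA
          cases W with
          | nil => exact hpq rfl
          | cons hadj2 W2 =>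
            rw [SimpleGraph.Walk.support_cons, List.tail_cons,
              SimpleGraph.Walk.support_eq_cons] at hr
            simp only [List.head?_cons, Option.some_inj] at hr
            subst hr
            have hW2 : W2 = SimpleGraph.Walk.nil :=
              SimpleGraph.Walk.isPath_iff_eq_nil.mp
                ((SimpleGraph.Walk.cons_isPath_iff _ _).mp hWpath).1
            subst hW2
            simp [SimpleGraph.Walk.length_cons] at h3
        have hptail : Sum.inr p ∈ W.support.tail := by
          have hmem : Sum.inr p ∈ W.support := W.end_mem_support
          rw [SimpleGraph.Walk.support_eq_cons] at hmem
          rcases List.mem_cons.mp hmem with hmem | hmem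
          · exact absurd (Sum.inr_injective hmem) hpq
          · exact hmem
        obtain ⟨C, hC, hss⟩ := no_return hP W hWpath q Aᶜ rfl hAc hfirst p hptail
        obtain ⟨x, hxC, hxAc⟩ := Set.exists_of_ssubset hss
        have hxA : x ∈ A := not_not.mp hxAc
        obtain rfl : C = A := part_eq hP p hC hA hxC hxA
        obtain ⟨a, ha⟩ := part_nonempty hP q hAc
        exact ha (hss.1 ha)
  intro v c hc
  rcases v with i | p
  · cases c with
    | nil => exact ((SimpleGraph.Walk.isCycle_def _).mp hc).2.1 rfl
    | cons hadj W =>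
      obtain ⟨r, rfl, -⟩ := adj_inl_cases hadj
      have hmem : Sum.inr r ∈ (SimpleGraph.Walk.cons hadj W).support := by
        rw [SimpleGraph.Walk.support_cons]
        exact List.mem_cons_of_mem _ W.start_mem_support
      exact key r _ (hc.rotate hmem)
  · exact key p c hc

omit [Fintype α] in
lemma elem_nbr (i : α) : ∃ p : ↥P, (GP P).neighborSet (Sum.inl i) = {Sum.inr p} := by
  obtain ⟨q, hq, hqi⟩ := hP.2.1 i
  refine ⟨⟨q, hq⟩, ?_⟩
  ext y
  rcases y with j | r
  · simp only [SimpleGraph.mem_neighborSet]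
    constructor
    · intro h; exact absurd h adj_inl_inl
    · intro h; simp at h
  · simp only [SimpleGraph.mem_neighborSet, Set.mem_singleton_iff]
    constructor
    · intro h
      have h1 : ({i} : Set α) ∈ r.1 := h
      have h2 : ({i} : Set α) ∈ ((⟨q, hq⟩ : ↥P) : Set (Set α)) := hqi
      rw [part_unique hP h1 h2]
    · intro h
      rcases Sum.inr_injective h with rfl
      exact adj_inl_inr.mpr hqi

lemma inr_nbr_ge3 (hcard : 3 ≤ Fintype.card α) (p : ↥P) :
    3 ≤ ((GP P).neighborSet (Sum.inr p)).ncard := by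
  classical
  have hne : Nonempty α := Fintype.card_pos_iff.mp (by omega)
  obtain ⟨i₀⟩ := hne
  set f : Set α → α ⊕ ↥P := fun A =>
    if h : ∃ i : α, A = {i} then Sum.inl h.choose
    else if h2 : ∃ q : ↥P, Aᶜ ∈ q.1 then Sum.inr h2.choose
    else Sum.inl i₀ with hf
  have hbig : ∀ A ∈ p.1, (¬ ∃ i : α, A = {i}) → ∃ q : ↥P, Aᶜ ∈ q.1 := by
    intro A hA hns
    have h1 : 1 ≤ A.ncard := (Set.ncard_pos A.toFinite).mpr (part_nonempty hP p hA)
    have h2 : A.ncard ≠ 1 := fun h => hns (Set.ncard_eq_one.mp h)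
    exact exists_nbr hP p hA (by omega)
  have hmaps : ∀ A ∈ p.1, f A ∈ (GP P).neighborSet (Sum.inr p) := by
    intro A hA
    rw [hf]
    by_cases h : ∃ i : α, A = {i}
    · simp only [dif_pos h]
      have : A = {h.choose} := h.choose_spec
      exact adj_inr_inl.mpr (this ▸ hA)
    · simp only [dif_neg h]
      have h2 := hbig A hA h
      simp only [dif_pos h2]
      exact ⟨ne_of_compl_mem hP hA h2.choose_spec, A, hA, h2.choose_spec⟩
  have hinj : Set.InjOn f p.1 := by
    intro A hA B hB hfAB
    rw [hf] at hfAB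
    by_cases hA1 : ∃ i : α, A = {i} <;> by_cases hB1 : ∃ i : α, B = {i}
    · simp only [dif_pos hA1, dif_pos hB1] at hfAB
      have := Sum.inl_injective hfAB
      rw [hA1.choose_spec, hB1.choose_spec, this]
    · simp only [dif_pos hA1, dif_neg hB1, dif_pos (hbig B hB hB1)] at hfAB
      exact absurd hfAB (by simp)
    · simp only [dif_neg hA1, dif_pos hB1, dif_pos (hbig A hA hA1)] at hfAB
      exact absurd hfAB (by simp)
    · simp only [dif_neg hA1, dif_neg hB1, dif_pos (hbig A hA hA1),
        dif_pos (hbig B hB hB1)] at hfAB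
      have := Sum.inr_injective hfAB
      exact witness_unique hP hA hB (hbig A hA hA1).choose_spec
        (this ▸ (hbig B hB hB1).choose_spec)
  calc 3 ≤ p.1.ncard := (hP.1 p.1 p.2).2
    _ ≤ ((GP P).neighborSet (Sum.inr p)).ncard :=
      Set.ncard_le_ncard_of_injOn f hmaps hinj (Set.toFinite _)

end Aux

/-- for a phylogenetic collection of partitions `P`, the graph `G_P` is a
phylogenetic tree with leaf set `N`: it is a tree, no vertex has degree 2, and its
leaves (degree-1 vertices) are exactly the elements of `N`. -/
theorem stmt8 {α : Type*} [Fintype α] (hcard : 3 ≤ Fintype.card α)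
    (P : Set (Set (Set α))) (hP : IsPhyloP P) :
    (GP P).IsTree ∧ (∀ x : α ⊕ ↥P, ((GP P).neighborSet x).ncard ≠ 2) ∧
      ∀ x : α ⊕ ↥P, ((GP P).neighborSet x).ncard = 1 ↔ ∃ i : α, x = Sum.inl i := by
  have hdeg : ∀ i : α, ((GP P).neighborSet (Sum.inl i)).ncard = 1 := by
    intro i
    obtain ⟨p, hp⟩ := elem_nbr hP i
    rw [hp, Set.ncard_singleton]
  have hdeg3 := inr_nbr_ge3 hP hcard
  refine ⟨((GP P).isTree_iff).mpr ⟨gp_connected hP hcard, gp_acyclic hP⟩, ?_, ?_⟩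
  · rintro (i | p)
    · rw [hdeg i]; omega
    · have := hdeg3 p; omega
  · rintro (i | p)
    · simp [hdeg i]
    · constructor
      · intro h
        have := hdeg3 p
        omega
      · rintro ⟨i, h⟩
        exact absurd h (by simp)
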